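/- Jaccard triangle inequality for indicator functions: for measurable sets A, B, C of finite positive Lebesgue measure, (1 − μ(A∩C)/μ(A∪C)) ≤ (1 − μ(A∩B)/μ(A∪B)) + (1 − μ(B∩C)/μ(B∪C)). -/

import Mathlib

open MeasureTheory

private lemma toReal_eq_add' {x y z : ENNReal} (h : x + y = z) (hx : x ≠ ⊤) (hy : y ≠ ⊤) :
    z.toReal = x.toReal + y.toReal := by
  rw [← h, ENNReal.toReal_add hx hy]

theorem jaccard_triangle
    (A B C : Set ℝ)
    (hA : MeasurableSet A) (hB : MeasurableSet B) (hC : MeasurableSet C)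
    (hA0 : 0 < volume A) (hB0 : 0 < volume B) (hC0 : 0 < volume C)
    (hAfin : volume A < ⊤) (hBfin : volume B < ⊤) (hCfin : volume C < ⊤) :
    1 - (volume (A ∩ C)).toReal / (volume (A ∪ C)).toReal ≤
      (1 - (volume (A ∩ B)).toReal / (volume (A ∪ B)).toReal) +
      (1 - (volume (B ∩ C)).toReal / (volume (B ∪ C)).toReal) := by
  have hUfin : volume (A ∪ B ∪ C) < ⊤ :=
    measure_union_lt_top (measure_union_lt_top hAfin hBfin) hCfin
  have fin : ∀ S : Set ℝ, S ⊆ A ∪ B ∪ C → volume S ≠ ⊤ := fun S h =>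
    (lt_of_le_of_lt (measure_mono h) hUfin).ne
  -- notation for real measures
  set mA := (volume A).toReal with hmA
  set mB := (volume B).toReal with hmB
  set mC := (volume C).toReal with hmC
  set iAB := (volume (A ∩ B)).toReal
  set iBC := (volume (B ∩ C)).toReal
  set iAC := (volume (A ∩ C)).toReal
  set uAB := (volume (A ∪ B)).toReal
  set uBC := (volume (B ∪ C)).toReal
  set uAC := (volume (A ∪ C)).toReal
  set U := (volume (A ∪ B ∪ C)).toReal
  set g := (volume (A ∩ B ∩ C)).toReal
  set w := (volume ((A ∪ C) ∩ B)).toReal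
  -- inclusion-exclusion facts
  have F1 : mA + mB = uAB + iAB := by
    have h := measure_union_add_inter (μ := volume) A hB
    have := toReal_eq_add' h (fin _ (by intro x hx; rcases hx with h|h <;> simp [h]))
      (fin _ (by intro x hx; exact Or.inl (Or.inl hx.1)))
    rw [ENNReal.toReal_add hAfin.ne hBfin.ne] at this
    linarith [this]
  have F2 : mB + mC = uBC + iBC := by
    have h := measure_union_add_inter (μ := volume) B hC
    have := toReal_eq_add' h (fin _ (by intro x hx; rcases hx with h|h; exact Or.inl (Or.inr h); exact Or.inr h))
      (fin _ (by intro x hx; exact Or.inl (Or.inr hx.1)))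
    rw [ENNReal.toReal_add hBfin.ne hCfin.ne] at this
    linarith [this]
  have F3 : mA + mC = uAC + iAC := by
    have h := measure_union_add_inter (μ := volume) A hC
    have := toReal_eq_add' h (fin _ (by intro x hx; rcases hx with h|h; exact Or.inl (Or.inl h); exact Or.inr h))
      (fin _ (by intro x hx; exact Or.inl (Or.inl hx.1)))
    rw [ENNReal.toReal_add hAfin.ne hCfin.ne] at this
    linarith [this]
  have F4 : uAC + mB = U + w := by
    have h := measure_union_add_inter (μ := volume) (A ∪ C) hB
    have hset : A ∪ C ∪ B = A ∪ B ∪ C := by rw [Set.union_right_comm]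
    rw [hset] at h
    have := toReal_eq_add' h hUfin.ne (fin _ (by intro x hx; exact Or.inl (Or.inr hx.2)))
    have h2 : (volume (A ∪ C) + volume B).toReal = uAC + mB :=
      ENNReal.toReal_add (fin _ (by intro x hx; rcases hx with h|h; exact Or.inl (Or.inl h); exact Or.inr h)) hBfin.ne
    linarith [this, h2]
  have F5 : iAB + iBC = w + g := by
    have h := measure_union_add_inter (μ := volume) (A ∩ B) (hC.inter hB)
    have hs1 : A ∩ B ∪ C ∩ B = (A ∪ C) ∩ B := by
      ext x; simp only [Set.mem_union, Set.mem_inter_iff]; tauto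
    have hs2 : A ∩ B ∩ (C ∩ B) = A ∩ B ∩ C := by
      ext x; simp only [Set.mem_inter_iff]; tauto
    rw [hs1, hs2] at h
    have := toReal_eq_add' h (fin _ (by intro x hx; exact Or.inl (Or.inr hx.2)))
      (fin _ (by intro x hx; exact Or.inl (Or.inl hx.1.1)))
    have h2 : (volume (A ∩ B) + volume (C ∩ B)).toReal = iAB + iBC :=by
      rw [ENNReal.toReal_add (fin _ (by intro x hx; exact Or.inl (Or.inl hx.1)))
        (fin _ (by intro x hx; exact Or.inl (Or.inr hx.2))), Set.inter_comm C B]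
    linarith [this, h2]
  -- nonnegativity / monotonicity facts
  have nn : ∀ x : ENNReal, 0 ≤ x.toReal := fun x => ENNReal.toReal_nonneg
  have mono : ∀ S T : Set ℝ, S ⊆ T → T ⊆ A ∪ B ∪ C → (volume S).toReal ≤ (volume T).toReal :=
    fun S T hst hT => ENNReal.toReal_mono (fin _ hT) (measure_mono hst)
  have hgi : g ≤ iAC := mono _ _ (fun x hx => ⟨hx.1.1, hx.2⟩)
    (fun x hx => Or.inl (Or.inl hx.1))
  have hwB : w ≤ mB := mono _ _ (fun x hx => hx.2) (fun x hx => Or.inl (Or.inr hx))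
  have hiuAC : iAC ≤ uAC := mono _ _ (fun x hx => Or.inl hx.1)
    (fun x hx => by rcases hx with h|h; exact Or.inl (Or.inl h); exact Or.inr h)
  have hiuAB : iAB ≤ uAB := mono _ _ (fun x hx => Or.inl hx.1)
    (fun x hx => by rcases hx with h|h; exact Or.inl (Or.inl h); exact Or.inl (Or.inr h))
  have hiuBC : iBC ≤ uBC := mono _ _ (fun x hx => Or.inl hx.1)
    (fun x hx => by rcases hx with h|h; exact Or.inl (Or.inr h); exact Or.inr h)
  have huABU : uAB ≤ U := mono _ _ (fun x hx => Or.inl hx) (fun x hx => hx)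
  have huBCU : uBC ≤ U := mono _ _
    (fun x hx => by rcases hx with h|h; exact Or.inl (Or.inr h); exact Or.inr h) (fun x hx => hx)
  -- positivity of denominators
  have hAposR : 0 < mA := ENNReal.toReal_pos hA0.ne' hAfin.ne
  have hBposR : 0 < mB := ENNReal.toReal_pos hB0.ne' hBfin.ne
  have huAB : 0 < uAB := lt_of_lt_of_le hAposR (mono _ _ (fun x hx => Or.inl hx)
    (fun x hx => by rcases hx with h|h; exact Or.inl (Or.inl h); exact Or.inl (Or.inr h)))
  have huBC : 0 < uBC := lt_of_lt_of_le hBposR (mono _ _ (fun x hx => Or.inl hx)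
    (fun x hx => by rcases hx with h|h; exact Or.inl (Or.inr h); exact Or.inr h))
  have huAC : 0 < uAC := lt_of_lt_of_le hAposR (mono _ _ (fun x hx => Or.inl hx)
    (fun x hx => by rcases hx with h|h; exact Or.inl (Or.inl h); exact Or.inr h))
  have hUpos : 0 < U := lt_of_lt_of_le huAB huABU
  have hgnn : 0 ≤ g := nn _
  have hiABnn : 0 ≤ iAB := nn _
  have hiBCnn : 0 ≤ iBC := nn _
  have hiACnn : 0 ≤ iAC := nn _
  -- rewrite goal
  rw [one_sub_div huAC.ne', one_sub_div huAB.ne', one_sub_div huBC.ne']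
  have step1 : (uAC - iAC) / uAC ≤ ((uAB - iAB) + (uBC - iBC)) / U := by
    rw [div_le_div_iff₀ huAC hUpos]
    -- (uAC - iAC) * U ≤ (sAB + sBC) * uAC, with U = uAC + (mB - w),
    -- sAB + sBC = sAC + 2(mB - w) + 2(iAC - g)
    nlinarith [mul_nonneg (sub_nonneg.2 hwB) (sub_nonneg.2 hiuAC),
      mul_nonneg (sub_nonneg.2 hwB) hiACnn,
      mul_nonneg (sub_nonneg.2 hgi) (le_of_lt huAC),
      mul_nonneg hiACnn (sub_nonneg.2 hwB)]
  have step2 : ((uAB - iAB) + (uBC - iBC)) / U ≤ (uAB - iAB) / uAB + (uBC - iBC) / uBC := by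
    rw [add_div]
    gcongr
  linarith [step1, step2]
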